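/- Assume the users are indexed in nondecreasing order of deadlines, i.e. d 1 ≤ d 2 ≤ … ≤ d U, and let S^u (u = 0,…,U) be defined by the recursion: S⁰ = ∅; S^u = S^{u−1} ∪ {u} if this set is feasible, and otherwise S^u = (S^{u−1} ∪ {u}) \ {ℓ_u} with ℓ_u an element of S^{u−1} ∪ {u} of maximum ν. Then for all u ≤ ℓ ≤ U there exists a feasible set W ⊆ {1,…,ℓ} of maximum cardinality among feasible subsets of {1,…,ℓ} such that W ∩ {1,…,u} ⊆ S^u. (Intermediate claim in the proof of Theorem 1.) -/

import Mathlib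

/-- A schedule `σ : ℕ → Option (Fin U)` serves the user set `S`:
(i) the users appearing in slots `{1,…,T}` are exactly those of `S`;
(ii) each `u ∈ S` appears in exactly `ν u` slots;
(iii) every slot at which a user `u` appears is at most `d u`;
(iv) for every `t ∈ {1,…,T}`, the number of busy slots in `{1,…,t}` is at most
`∑_{s=1}^{t} A s`. -/
def Serves (T U : ℕ) (ν d : Fin U → ℕ) (A : ℕ → ℕ)
    (σ : ℕ → Option (Fin U)) (S : Finset (Fin U)) : Prop :=
  (∀ u : Fin U, u ∈ S ↔ ∃ t ∈ Finset.Icc 1 T, σ t = some u) ∧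
  (∀ u ∈ S, ((Finset.Icc 1 T).filter (fun t => σ t = some u)).card = ν u) ∧
  (∀ u : Fin U, ∀ t ∈ Finset.Icc 1 T, σ t = some u → t ≤ d u) ∧
  (∀ t ∈ Finset.Icc 1 T,
    ((Finset.Icc 1 t).filter (fun s => σ s ≠ none)).card ≤ ∑ s ∈ Finset.Icc 1 t, A s)

/-- A user set is feasible if some schedule serves it. -/
def Feasible (T U : ℕ) (ν d : Fin U → ℕ) (A : ℕ → ℕ) (S : Finset (Fin U)) : Prop :=
  ∃ σ : ℕ → Option (Fin U), Serves T U ν d A σ S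


namespace Stmt2Aux
open Finset
open scoped Classical
variable {U : ℕ}

def Energy (A : ℕ → ℕ) (t : ℕ) : ℕ := ∑ s ∈ Finset.Icc 1 t, A s

def Work (ν d : Fin U → ℕ) (S : Finset (Fin U)) (t : ℕ) : ℕ :=
  ∑ i ∈ S.filter (fun i => d i ≤ t), ν i

def Ok (T : ℕ) (ν d : Fin U → ℕ) (A : ℕ → ℕ) (S : Finset (Fin U)) : Prop :=
  ∀ t ∈ Finset.Icc 1 T, ∀ r, r ≤ t → Work ν d S t + r ≤ Energy A r + t

lemma serves_ok {T : ℕ} {ν d : Fin U → ℕ} {A : ℕ → ℕ} {σ : ℕ → Option (Fin U)}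
    {S : Finset (Fin U)} (h : Serves T U ν d A σ S) : Ok T ν d A S := by
  obtain ⟨h1, h2, h3, h4⟩ := h
  intro t ht r hr
  rw [Finset.mem_Icc] at ht
  set F := S.filter (fun i => d i ≤ t) with hF
  set slots := fun i => (Finset.Icc 1 t).filter (fun s => σ s = some i) with hsl
  have hslots : ∀ i ∈ F, slots i = (Finset.Icc 1 T).filter (fun s => σ s = some i) := by
    intro i hi
    rw [hF, Finset.mem_filter] at hi
    ext s
    simp only [hsl, Finset.mem_filter, Finset.mem_Icc]
    constructor
    · rintro ⟨⟨ha, hb⟩, hc⟩; exact ⟨⟨ha, le_trans hb ht.2⟩, hc⟩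
    · rintro ⟨⟨ha, hb⟩, hc⟩
      exact ⟨⟨ha, le_trans (h3 i s (by rw [Finset.mem_Icc]; exact ⟨ha, hb⟩) hc) hi.2⟩, hc⟩
  have hwork : Work ν d S t = ∑ i ∈ F, (slots i).card := by
    apply Finset.sum_congr rfl
    intro i hi
    rw [hslots i hi, h2 i (Finset.mem_of_mem_filter i hi)]
  have hdisj : ∀ i ∈ F, ∀ j ∈ F, i ≠ j → Disjoint (slots i) (slots j) := by
    intro i _ j _ hij
    apply Finset.disjoint_left.2
    intro s hs hs'
    rw [hsl, Finset.mem_filter] at hs hs'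
    exact hij (by rw [hs.2] at hs'; exact (Option.some_injective _ hs'.2).symm ▸ rfl)
  have hcard : (F.biUnion slots).card = ∑ i ∈ F, (slots i).card :=
    Finset.card_biUnion hdisj
  have hsub : F.biUnion slots ⊆ (Finset.Icc 1 t).filter (fun s => σ s ≠ none) := by
    intro s hs
    rw [Finset.mem_biUnion] at hs
    obtain ⟨i, _, hsi⟩ := hs
    rw [hsl, Finset.mem_filter] at hsi
    rw [Finset.mem_filter]
    exact ⟨hsi.1, by rw [hsi.2]; simp⟩
  have hbusy : ((Finset.Icc 1 t).filter (fun s => σ s ≠ none)).card ≤ Energy A r + (t - r) := by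
    have hsplit : (Finset.Icc 1 t).filter (fun s => σ s ≠ none) ⊆
        ((Finset.Icc 1 r).filter (fun s => σ s ≠ none)) ∪ Finset.Icc (r+1) t := by
      intro s hs
      rw [Finset.mem_filter, Finset.mem_Icc] at hs
      rw [Finset.mem_union, Finset.mem_filter, Finset.mem_Icc, Finset.mem_Icc]
      rcases le_or_gt s r with h' | h'
      · exact Or.inl ⟨⟨hs.1.1, h'⟩, hs.2⟩
      · exact Or.inr ⟨h', hs.1.2⟩
    have h5 : ((Finset.Icc 1 r).filter (fun s => σ s ≠ none)).card ≤ Energy A r := by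
      rcases Nat.eq_zero_or_pos r with hr0 | hr0
      · subst hr0; simp
      · exact h4 r (by rw [Finset.mem_Icc]; exact ⟨hr0, le_trans hr ht.2⟩)
    calc ((Finset.Icc 1 t).filter (fun s => σ s ≠ none)).card
        ≤ (((Finset.Icc 1 r).filter (fun s => σ s ≠ none)) ∪ Finset.Icc (r+1) t).card :=
          Finset.card_le_card hsplit
      _ ≤ ((Finset.Icc 1 r).filter (fun s => σ s ≠ none)).card + (Finset.Icc (r+1) t).card :=
          Finset.card_union_le _ _
      _ ≤ Energy A r + (t - r) := by
          rw [Nat.card_Icc]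
          omega
  have : Work ν d S t ≤ Energy A r + (t - r) := by
    rw [hwork, ← hcard]
    exact le_trans (Finset.card_le_card hsub) hbusy
  omega


noncomputable def pick (d : Fin U → ℕ) (s : ℕ) (rem : Fin U → ℕ) : Option (Fin U) :=
  if h : ∃ i : Fin U, 0 < rem i ∧ s ≤ d i then some h.choose else none

lemma pick_spec {d : Fin U → ℕ} {s : ℕ} {rem : Fin U → ℕ} {i : Fin U}
    (h : pick d s rem = some i) : 0 < rem i ∧ s ≤ d i := by
  unfold pick at h
  split_ifs at h with h'
  · simp only [Option.some.injEq] at h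
    subst h
    exact h'.choose_spec

lemma pick_none {d : Fin U → ℕ} {s : ℕ} {rem : Fin U → ℕ}
    (h : pick d s rem = none) : ∀ i, 0 < rem i → d i < s := by
  intro i hi
  by_contra hc
  unfold pick at h
  rw [dif_pos ⟨i, hi, not_lt.1 hc⟩] at h
  exact absurd h (by simp)

noncomputable def remAux (ν d : Fin U → ℕ) (S : Finset (Fin U)) (T : ℕ) : ℕ → Fin U → ℕ
  | 0 => fun i => if i ∈ S then ν i else 0
  | (j+1) =>
      match pick d (T - j) (remAux ν d S T j) with
      | some i => Function.update (remAux ν d S T j) i (remAux ν d S T j i - 1)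
      | none => remAux ν d S T j

noncomputable def pickAt (ν d : Fin U → ℕ) (S : Finset (Fin U)) (T j : ℕ) : Option (Fin U) :=
  pick d (T - j) (remAux ν d S T j)

lemma remAux_succ_some {ν d : Fin U → ℕ} {S : Finset (Fin U)} {T j : ℕ} {i : Fin U}
    (h : pickAt ν d S T j = some i) :
    remAux ν d S T (j+1) = Function.update (remAux ν d S T j) i (remAux ν d S T j i - 1) := by
  show (match pick d (T - j) (remAux ν d S T j) with
      | some i => Function.update (remAux ν d S T j) i (remAux ν d S T j i - 1)
      | none => remAux ν d S T j) = _
  rw [show pick d (T - j) (remAux ν d S T j) = some i from h]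

lemma remAux_succ_none {ν d : Fin U → ℕ} {S : Finset (Fin U)} {T j : ℕ}
    (h : pickAt ν d S T j = none) :
    remAux ν d S T (j+1) = remAux ν d S T j := by
  show (match pick d (T - j) (remAux ν d S T j) with
      | some i => Function.update (remAux ν d S T j) i (remAux ν d S T j i - 1)
      | none => remAux ν d S T j) = _
  rw [show pick d (T - j) (remAux ν d S T j) = none from h]

lemma remAux_le (ν d : Fin U → ℕ) (S : Finset (Fin U)) (T : ℕ) :
    ∀ j i, remAux ν d S T (j+1) i ≤ remAux ν d S T j i := by
  intro j i
  rcases h : pickAt ν d S T j with _ | i'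
  · rw [remAux_succ_none h]
  · rw [remAux_succ_some h]
    rcases eq_or_ne i i' with rfl | hne
    · rw [Function.update_self]; omega
    · rw [Function.update_of_ne hne]

lemma remAux_le_init (ν d : Fin U → ℕ) (S : Finset (Fin U)) (T : ℕ) (j : ℕ) (i : Fin U) :
    remAux ν d S T j i ≤ (if i ∈ S then ν i else 0) := by
  induction j with
  | zero => exact le_refl _
  | succ j ih => exact le_trans (remAux_le ν d S T j i) ih

lemma remAux_count (ν d : Fin U → ℕ) (S : Finset (Fin U)) (T : ℕ) (j : ℕ) (i : Fin U) :
    remAux ν d S T j i + ((Finset.range j).filter (fun j' => pickAt ν d S T j' = some i)).card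
      = (if i ∈ S then ν i else 0) := by
  induction j with
  | zero => simp [remAux]
  | succ j ih =>
    rw [Finset.range_add_one, Finset.filter_insert]
    rcases h : pickAt ν d S T j with _ | i'
    · rw [remAux_succ_none h, if_neg (by simp [h])]
      exact ih
    · rw [remAux_succ_some h]
      rcases eq_or_ne i' i with rfl | hne
      · rw [if_pos (by simp [h]), Finset.card_insert_of_notMem (by simp)]
        rw [Function.update_self]
        have := (pick_spec h).1
        omega
      · rw [if_neg (by simp [h, hne]), Function.update_of_ne (Ne.symm hne)]
        exact ih

noncomputable def tot (ν d : Fin U → ℕ) (S : Finset (Fin U)) (T j : ℕ) : ℕ :=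
  ∑ i, remAux ν d S T j i

lemma tot_succ_some {ν d : Fin U → ℕ} {S : Finset (Fin U)} {T j : ℕ} {i : Fin U}
    (h : pickAt ν d S T j = some i) :
    tot ν d S T j = tot ν d S T (j+1) + 1 := by
  unfold tot
  rw [remAux_succ_some h, Finset.sum_update_of_mem (Finset.mem_univ i)]
  have h1 := (pick_spec h).1
  rw [Finset.sdiff_singleton_eq_erase]
  have h2 : ∑ x ∈ Finset.univ.erase i, remAux ν d S T j x + remAux ν d S T j i
      = ∑ x, remAux ν d S T j x := Finset.sum_erase_add _ _ (Finset.mem_univ i)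
  omega

lemma tot_succ_none {ν d : Fin U → ℕ} {S : Finset (Fin U)} {T j : ℕ}
    (h : pickAt ν d S T j = none) :
    tot ν d S T (j+1) = tot ν d S T j := by
  unfold tot
  rw [remAux_succ_none h]

lemma tot_drop (ν d : Fin U → ℕ) (S : Finset (Fin U)) (T : ℕ) :
    ∀ j k, tot ν d S T j = tot ν d S T (j+k)
      + ((Finset.Ico j (j+k)).filter (fun j' => pickAt ν d S T j' ≠ none)).card := by
  intro j k
  induction k with
  | zero => simp
  | succ k ih =>
    have hins : Finset.Ico j (j+(k+1)) = insert (j+k) (Finset.Ico j (j+k)) := by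
      ext x
      simp only [Finset.mem_Ico, Finset.mem_insert]
      omega
    rw [hins, Finset.filter_insert]
    have hadd : j + (k+1) = (j+k) + 1 := by omega
    rw [hadd]
    rcases h : pickAt ν d S T (j+k) with _ | i
    · rw [if_neg (by simp [h]), tot_succ_none h]
      exact ih
    · rw [if_pos (by simp [h]), Finset.card_insert_of_notMem (by simp)]
      have := tot_succ_some h
      omega


-- new material below

lemma tot_le_work {ν d : Fin U → ℕ} {S : Finset (Fin U)} {T j t : ℕ}
    (h : ∀ i, 0 < remAux ν d S T j i → d i ≤ t) :
    tot ν d S T j ≤ Work ν d S t := by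
  unfold tot Work
  have h1 : ∑ i, remAux ν d S T j i
      = ∑ i ∈ Finset.univ.filter (fun i => d i ≤ t), remAux ν d S T j i := by
    symm
    apply Finset.sum_filter_of_ne
    intro i _ hi
    exact h i (Nat.pos_of_ne_zero hi)
  rw [h1]
  calc ∑ i ∈ Finset.univ.filter (fun i => d i ≤ t), remAux ν d S T j i
      ≤ ∑ i ∈ Finset.univ.filter (fun i => d i ≤ t), (if i ∈ S then ν i else 0) :=
        Finset.sum_le_sum (fun i _ => remAux_le_init ν d S T j i)
    _ = ∑ i ∈ (Finset.univ.filter (fun i => d i ≤ t)) ∩ S, ν i := Finset.sum_ite_mem _ _ _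
    _ = ∑ i ∈ S.filter (fun i => d i ≤ t), ν i := by
        apply Finset.sum_congr _ (fun _ _ => rfl)
        ext i
        simp only [Finset.mem_inter, Finset.mem_filter, Finset.mem_univ, true_and]
        tauto

lemma energy_zero (A : ℕ → ℕ) : Energy A 0 = 0 := by simp [Energy]

lemma invariant {T : ℕ} {ν d : Fin U → ℕ} {A : ℕ → ℕ} {S : Finset (Fin U)}
    (hd : ∀ i, d i ∈ Finset.Icc 1 T) (hS : Ok T ν d A S) :
    ∀ j, j ≤ T → ∀ r, r ≤ T - j → tot ν d S T j + r ≤ Energy A r + (T - j) := by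
  have hwork : ∀ t, 1 ≤ t → t ≤ T → ∀ r, r ≤ t → Work ν d S t + r ≤ Energy A r + t := by
    intro t h1 h2 r hr
    exact hS t (Finset.mem_Icc.2 ⟨h1, h2⟩) r hr
  have hwork0 : Work ν d S 0 = 0 := by
    unfold Work
    apply Finset.sum_eq_zero
    intro i hi
    rw [Finset.mem_filter] at hi
    have := (Finset.mem_Icc.1 (hd i)).1
    omega
  have hwork' : ∀ t, t ≤ T → ∀ r, r ≤ t → Work ν d S t + r ≤ Energy A r + t := by
    intro t h2 r hr
    rcases Nat.eq_zero_or_pos t with rfl | h1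
    · interval_cases r
      rw [hwork0, energy_zero]
    · exact hwork t h1 h2 r hr
  intro j
  induction j with
  | zero =>
    intro _ r hr
    have : tot ν d S T 0 = Work ν d S T := by
      apply tot_le_work (t := T) ?_ |>.antisymm ?_
      · intro i _
        exact (Finset.mem_Icc.1 (hd i)).2
      · unfold tot Work
        calc ∑ i ∈ S.filter (fun i => d i ≤ T), ν i
            = ∑ i ∈ S.filter (fun i => d i ≤ T), remAux ν d S T 0 i := by
              apply Finset.sum_congr rfl
              intro i hi
              rw [Finset.mem_filter] at hi
              show ν i = if i ∈ S then ν i else 0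
              rw [if_pos hi.1]
          _ ≤ ∑ i, remAux ν d S T 0 i :=
              Finset.sum_le_sum_of_subset (Finset.subset_univ _)
    rw [this]
    simpa using hwork' T le_rfl r (by simpa using hr)
  | succ j ih =>
    intro hj r hr
    rcases h : pickAt ν d S T j with _ | i
    · rw [tot_succ_none h]
      have hrem : ∀ i, 0 < remAux ν d S T j i → d i ≤ T - (j+1) := by
        intro i hi
        have := pick_none h i hi
        omega
      have h1 := tot_le_work hrem
      have h2 := hwork' (T - (j+1)) (by omega) r hr
      omega
    · have h1 := tot_succ_some h
      have h2 := ih (by omega) r (by omega)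
      omega


lemma slots_card {ν d : Fin U → ℕ} {S : Finset (Fin U)} {T : ℕ}
    {σ : ℕ → Option (Fin U)}
    (hσ : ∀ s, 1 ≤ s → s ≤ T → σ s = pickAt ν d S T (T - s))
    (p : Option (Fin U) → Prop) [DecidablePred p] {t : ℕ} (h2 : t ≤ T) :
    ((Finset.Icc 1 t).filter (fun s => p (σ s))).card
      = ((Finset.Ico (T - t) T).filter (fun j => p (pickAt ν d S T j))).card := by
  apply Finset.card_nbij' (fun s => T - s) (fun j => T - j)
  · intro s hs
    rw [Finset.mem_coe, Finset.mem_filter, Finset.mem_Icc] at hs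
    beta_reduce
    rw [Finset.mem_coe, Finset.mem_filter, Finset.mem_Ico]
    refine ⟨by omega, ?_⟩
    rw [← hσ s hs.1.1 (by omega)]
    exact hs.2
  · intro j hj
    rw [Finset.mem_coe, Finset.mem_filter, Finset.mem_Ico] at hj
    beta_reduce
    rw [Finset.mem_coe, Finset.mem_filter, Finset.mem_Icc]
    refine ⟨⟨by omega, by omega⟩, ?_⟩
    rw [hσ (T - j) (by omega) (by omega), show T - (T - j) = j by omega]
    exact hj.2
  · intro s hs
    rw [Finset.mem_coe, Finset.mem_filter, Finset.mem_Icc] at hs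
    beta_reduce
    omega
  · intro j hj
    rw [Finset.mem_coe, Finset.mem_filter, Finset.mem_Ico] at hj
    beta_reduce
    omega

theorem ok_feasible {T : ℕ} {ν d : Fin U → ℕ} {A : ℕ → ℕ} {S : Finset (Fin U)}
    (hν : ∀ i, 1 ≤ ν i) (hd : ∀ i, d i ∈ Finset.Icc 1 T) (hS : Ok T ν d A S) :
    Feasible T U ν d A S := by
  set σ : ℕ → Option (Fin U) :=
    fun s => if 1 ≤ s ∧ s ≤ T then pickAt ν d S T (T - s) else none with hσdef
  have hσ : ∀ s, 1 ≤ s → s ≤ T → σ s = pickAt ν d S T (T - s) := by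
    intro s h1 h2
    simp only [hσdef, if_pos (And.intro h1 h2)]
  have htotT : tot ν d S T T = 0 := by
    have := invariant hd hS T le_rfl 0 (by omega)
    rw [energy_zero] at this
    omega
  have hremT : ∀ i, remAux ν d S T T i = 0 := by
    intro i
    have := Finset.sum_eq_zero_iff.1 htotT i (Finset.mem_univ i)
    exact this
  have hcount : ∀ i ∈ S, ((Finset.range T).filter (fun j => pickAt ν d S T j = some i)).card = ν i := by
    intro i hi
    have := remAux_count ν d S T T i
    rw [hremT i, if_pos hi] at this
    omega
  have hTpos : U > 0 → 1 ≤ T := by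
    intro h
    have := Finset.mem_Icc.1 (hd ⟨0, h⟩)
    omega
  have hserves2 : ∀ u ∈ S, ((Finset.Icc 1 T).filter (fun t => σ t = some u)).card = ν u := by
    intro u hu
    have heq := slots_card hσ (fun o => o = some u) (le_refl T)
    rw [show T - T = 0 by omega, ← Finset.range_eq_Ico] at heq
    rw [← hcount u hu]
    convert heq using 2
  refine ⟨σ, ?_, hserves2, ?_, ?_⟩
  · intro u
    constructor
    · intro hu
      have hc := hserves2 u hu
      have : ((Finset.Icc 1 T).filter (fun t => σ t = some u)).Nonempty := by
        rw [← Finset.card_pos, hc]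
        exact hν u
      obtain ⟨t, ht⟩ := this
      rw [Finset.mem_filter] at ht
      exact ⟨t, ht.1, ht.2⟩
    · rintro ⟨t, ht, hts⟩
      rw [Finset.mem_Icc] at ht
      rw [hσ t ht.1 ht.2] at hts
      have := (pick_spec hts).1
      by_contra hu
      have h0 := remAux_count ν d S T (T - t) u
      rw [if_neg hu] at h0
      omega
  · intro u t ht hts
    rw [Finset.mem_Icc] at ht
    rw [hσ t ht.1 ht.2] at hts
    have := (pick_spec hts).2
    omega
  · intro t ht
    rw [Finset.mem_Icc] at ht
    have heq := slots_card hσ (fun o => o ≠ none) ht.2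
    rw [show ((Finset.Icc 1 t).filter (fun s => σ s ≠ none)).card
        = ((Finset.Ico (T - t) T).filter (fun j => pickAt ν d S T j ≠ none)).card from heq]
    have hdrop := tot_drop ν d S T (T - t) t
    rw [show T - t + t = T by omega, htotT] at hdrop
    have hinv := invariant hd hS (T - t) (by omega) t (by omega)
    rw [show T - (T - t) = t by omega] at hinv
    show _ ≤ Energy A t
    omega


lemma work_mono {ν d : Fin U → ℕ} {S₁ S₂ : Finset (Fin U)} (h : S₁ ⊆ S₂) (t : ℕ) :
    Work ν d S₁ t ≤ Work ν d S₂ t :=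
  Finset.sum_le_sum_of_subset (Finset.filter_subset_filter _ h)

lemma ok_of_work_le {T : ℕ} {ν d : Fin U → ℕ} {A : ℕ → ℕ} {S₁ S₂ : Finset (Fin U)}
    (h : ∀ t, Work ν d S₁ t ≤ Work ν d S₂ t) (h2 : Ok T ν d A S₂) : Ok T ν d A S₁ := by
  intro t ht r hr
  have := h t
  have := h2 t ht r hr
  omega

lemma ok_subset {T : ℕ} {ν d : Fin U → ℕ} {A : ℕ → ℕ} {S₁ S₂ : Finset (Fin U)}
    (h : S₁ ⊆ S₂) (h2 : Ok T ν d A S₂) : Ok T ν d A S₁ :=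
  ok_of_work_le (work_mono h) h2

lemma ok_empty {T : ℕ} {ν d : Fin U → ℕ} {A : ℕ → ℕ} : Ok T ν d A (∅ : Finset (Fin U)) := by
  intro t ht r hr
  have : Work ν d (∅ : Finset (Fin U)) t = 0 := by simp [Work]
  omega

lemma work_insert {ν d : Fin U → ℕ} {S : Finset (Fin U)} {m : Fin U} (hm : m ∉ S) (t : ℕ) :
    Work ν d (insert m S) t = Work ν d S t + (if d m ≤ t then ν m else 0) := by
  unfold Work
  rw [Finset.filter_insert]
  split_ifs with h
  · rw [Finset.sum_insert (fun hc => hm (Finset.mem_of_mem_filter m hc))]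
    omega
  · omega

lemma work_congr {ν d : Fin U → ℕ} {S₁ S₂ : Finset (Fin U)} {t : ℕ}
    (h : ∀ i, (i ∈ S₁ ∧ d i ≤ t) ↔ (i ∈ S₂ ∧ d i ≤ t)) :
    Work ν d S₁ t = Work ν d S₂ t := by
  unfold Work
  apply Finset.sum_congr _ (fun _ _ => rfl)
  ext i
  simp only [Finset.mem_filter]
  exact h i


end Stmt2Aux

open Stmt2Aux in
/-- Intermediate claim in the proof of Theorem 1: for all `u ≤ ℓ ≤ U` there exists a
feasible set `W ⊆ {1,…,ℓ}` of maximum cardinality among feasible subsets of `{1,…,ℓ}`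
whose intersection with `{1,…,u}` is contained in `S^u`. (0-based: index `i : Fin U`
belongs to `{1,…,m}` iff `(i : ℕ) < m`.) -/
theorem stmt2 (T U : ℕ) (ν d : Fin U → ℕ) (A : ℕ → ℕ)
    (hν : ∀ i, 1 ≤ ν i) (hd : ∀ i, d i ∈ Finset.Icc 1 T)
    (hsort : Monotone d)
    (Sfun : ℕ → Finset (Fin U))
    (h0 : Sfun 0 = ∅)
    (hrec : ∀ k : Fin U,
      (Feasible T U ν d A (insert k (Sfun k.val)) →
        Sfun (k.val + 1) = insert k (Sfun k.val)) ∧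
      (¬ Feasible T U ν d A (insert k (Sfun k.val)) →
        ∃ ℓ ∈ insert k (Sfun k.val),
          (∀ i ∈ insert k (Sfun k.val), ν i ≤ ν ℓ) ∧
          Sfun (k.val + 1) = (insert k (Sfun k.val)).erase ℓ)) :
    ∀ u l : ℕ, u ≤ l → l ≤ U →
      ∃ W : Finset (Fin U),
        Feasible T U ν d A W ∧
        (∀ i ∈ W, (i : ℕ) < l) ∧
        (∀ W' : Finset (Fin U), (∀ i ∈ W', (i : ℕ) < l) →
          Feasible T U ν d A W' → W'.card ≤ W.card) ∧
        (∀ i ∈ W, (i : ℕ) < u → i ∈ Sfun u) := by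
  classical
  -- index bound on Sfun
  have hidx : ∀ u, u ≤ U → ∀ i ∈ Sfun u, (i : ℕ) < u := by
    intro u
    induction u with
    | zero => intro _ i hi; rw [h0] at hi; exact absurd hi (Finset.notMem_empty i)
    | succ u ih =>
      intro hu i hi
      set k : Fin U := ⟨u, by omega⟩ with hk
      have hsub : Sfun (u+1) ⊆ insert k (Sfun u) := by
        by_cases hf : Feasible T U ν d A (insert k (Sfun k.val))
        · rw [show Sfun (u+1) = Sfun (k.val+1) from rfl, (hrec k).1 hf]
        · obtain ⟨ℓ, _, _, heq⟩ := (hrec k).2 hf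
          rw [show Sfun (u+1) = Sfun (k.val+1) from rfl, heq]
          exact Finset.erase_subset _ _
      rcases Finset.mem_insert.1 (hsub hi) with rfl | hi'
      · exact Nat.lt_succ_self u
      · exact Nat.lt_succ_of_lt (ih (by omega) i hi')
  -- Sfun u is always Ok
  have hok : ∀ u, u ≤ U → Ok T ν d A (Sfun u) := by
    intro u
    induction u with
    | zero => intro _; rw [h0]; exact ok_empty
    | succ u ih =>
      intro hu
      set k : Fin U := ⟨u, by omega⟩ with hk
      have hkn : k ∉ Sfun u := fun hc => absurd (hidx u (by omega) k hc) (by simp [hk])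
      by_cases hf : Feasible T U ν d A (insert k (Sfun k.val))
      · rw [show Sfun (u+1) = Sfun (k.val+1) from rfl, (hrec k).1 hf]
        obtain ⟨σ, hσ⟩ := hf
        exact serves_ok hσ
      · obtain ⟨ℓ, hℓ, hmax, heq⟩ := (hrec k).2 hf
        rw [show Sfun (u+1) = Sfun (k.val+1) from rfl, heq]
        rcases eq_or_ne ℓ k with rfl | hne
        · rw [Finset.erase_insert hkn]
          exact ih (by omega)
        · have hℓS : ℓ ∈ Sfun u := by
            rcases Finset.mem_insert.1 hℓ with h | h
            · exact absurd h hne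
            · exact h
          have hdle : d ℓ ≤ d k := hsort (by
            show ℓ ≤ k
            rw [Fin.le_def]
            have := hidx u (by omega) ℓ hℓS
            simp only [hk]
            omega)
          have hνk : ν k ≤ ν ℓ := hmax k (Finset.mem_insert_self _ _)
          apply ok_of_work_le _ (ih (by omega))
          intro t
          have h1 : (insert k (Sfun k.val)).erase ℓ = insert k ((Sfun u).erase ℓ) :=
            Finset.erase_insert_of_ne (Ne.symm hne)
          have e1 : Work ν d ((insert k (Sfun k.val)).erase ℓ) t
              = Work ν d ((Sfun u).erase ℓ) t + (if d k ≤ t then ν k else 0) := by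
            rw [h1]
            exact work_insert (fun hc => hkn (Finset.mem_of_mem_erase hc)) t
          have e2 : Work ν d (Sfun u) t
              = Work ν d ((Sfun u).erase ℓ) t + (if d ℓ ≤ t then ν ℓ else 0) := by
            conv_lhs => rw [← Finset.insert_erase hℓS]
            exact work_insert (Finset.notMem_erase ℓ _) t
          rw [e1, e2]
          split_ifs with h1 h2 <;> omega
  -- main induction
  intro u
  induction u with
  | zero =>
    intro l _ hlU
    set F := Finset.univ.powerset.filter
      (fun W : Finset (Fin U) => (∀ i ∈ W, (i : ℕ) < l) ∧ Feasible T U ν d A W) with hF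
    have hne : F.Nonempty := by
      refine ⟨∅, ?_⟩
      rw [hF, Finset.mem_filter]
      exact ⟨Finset.mem_powerset.2 (Finset.empty_subset _),
        fun i hi => absurd hi (Finset.notMem_empty i),
        ok_feasible hν hd ok_empty⟩
    obtain ⟨W, hW, hWmax⟩ := Finset.exists_max_image F Finset.card hne
    rw [hF, Finset.mem_filter] at hW
    refine ⟨W, hW.2.2, hW.2.1, ?_, ?_⟩
    · intro W' hW'l hW'f
      apply hWmax
      rw [hF, Finset.mem_filter]
      exact ⟨Finset.mem_powerset.2 (Finset.subset_univ _), hW'l, hW'f⟩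
    · intro i _ hi
      omega
  | succ u ih =>
    intro l hul hlU
    obtain ⟨W, hWf, hWl, hWmax, hWint⟩ := ih l (by omega) hlU
    set k : Fin U := ⟨u, by omega⟩ with hk
    have hkval : (k : ℕ) = u := rfl
    set P := insert k (Sfun u) with hP
    have hPidx : ∀ i ∈ P, (i : ℕ) < u + 1 := by
      intro i hi
      rcases Finset.mem_insert.1 hi with rfl | hi'
      · simp [hk]
      · exact Nat.lt_succ_of_lt (hidx u (by omega) i hi')
    by_cases hf : Feasible T U ν d A (insert k (Sfun k.val))
    · have heq : Sfun (u+1) = P := (hrec k).1 hf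
      refine ⟨W, hWf, hWl, hWmax, ?_⟩
      intro i hi hiu
      rw [heq, hP]
      rcases Nat.lt_or_ge (i : ℕ) u with h | h
      · exact Finset.mem_insert_of_mem (hWint i hi h)
      · have : i = k := Fin.ext (by omega)
        rw [this]; exact Finset.mem_insert_self _ _
    · obtain ⟨ℓ, hℓP, hmax, heq⟩ := (hrec k).2 hf
      by_cases hℓW : ℓ ∈ W
      · -- exchange case
        set V := W.filter (fun i : Fin U => (i : ℕ) < u + 1) with hV
        have hVsub : V ⊆ P := by
          intro i hi
          rw [hV, Finset.mem_filter] at hi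
          rcases Nat.lt_or_ge (i : ℕ) u with h | h
          · exact Finset.mem_insert_of_mem (hWint i hi.1 h)
          · have hik : i = k := Fin.ext (by omega)
            rw [hik]; exact Finset.mem_insert_self _ _
        have hWok : Ok T ν d A W := by
          obtain ⟨σ, hσ⟩ := hWf
          exact serves_ok hσ
        have hPnotok : ¬ Ok T ν d A P := fun hc => hf (ok_feasible hν hd hc)
        have hVne : V ≠ P := by
          intro hVP'
          apply hPnotok
          rw [← hVP']
          exact ok_subset (Finset.filter_subset _ _) hWok
        obtain ⟨m, hmP, hmV⟩ := Finset.exists_of_ssubset (hVsub.ssubset_of_ne hVne)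
        have hmu : (m : ℕ) < u + 1 := hPidx m hmP
        have hmW : m ∉ W := fun hc => hmV (Finset.mem_filter.2 ⟨hc, hmu⟩)
        have hmℓ : m ≠ ℓ := fun hc => hmW (hc ▸ hℓW)
        have hℓu : (ℓ : ℕ) < u + 1 := hPidx ℓ hℓP
        have hℓV : ℓ ∈ V := Finset.mem_filter.2 ⟨hℓW, hℓu⟩
        have hνm : ν m ≤ ν ℓ := hmax m hmP
        set W' := insert m (W.erase ℓ) with hW'
        have hQok : Ok T ν d A (Sfun (u+1)) := hok (u+1) (by omega)
        have hW'ok : Ok T ν d A W' := by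
          intro t ht r hr
          rcases le_or_gt (d ℓ) t with hdℓ | hdℓ
          · -- νm ≤ νℓ swap
            have e1 : Work ν d W' t = Work ν d (W.erase ℓ) t + (if d m ≤ t then ν m else 0) :=
              work_insert (fun hc => hmW (Finset.mem_of_mem_erase hc)) t
            have e2 : Work ν d W t = Work ν d (W.erase ℓ) t + (if d ℓ ≤ t then ν ℓ else 0) := by
              rw [show W = insert ℓ (W.erase ℓ) from (Finset.insert_erase hℓW).symm,
                work_insert (Finset.notMem_erase ℓ _)]
              rw [Finset.insert_erase hℓW]
            have h3 := hWok t ht r hr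
            rw [if_pos hdℓ] at e2
            have : Work ν d W' t ≤ Work ν d W t := by
              rw [e1, e2]
              split_ifs <;> omega
            omega
          · -- t < d ℓ : compare with Sfun (u+1)
            have e1 : Work ν d W' t = Work ν d ((insert m V).erase ℓ) t := by
              apply work_congr
              intro i
              constructor
              · rintro ⟨hi, hdi⟩
                rcases Finset.mem_insert.1 hi with rfl | hi'
                · exact ⟨Finset.mem_erase.2 ⟨hmℓ, Finset.mem_insert_self _ _⟩, hdi⟩
                · rw [Finset.mem_erase] at hi'
                  have hiu : (i : ℕ) < u + 1 := by
                    by_contra hc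
                    have : ℓ ≤ i := by
                      rw [Fin.le_def]
                      omega
                    have := hsort this
                    omega
                  exact ⟨Finset.mem_erase.2 ⟨hi'.1,
                    Finset.mem_insert_of_mem (Finset.mem_filter.2 ⟨hi'.2, hiu⟩)⟩, hdi⟩
              · rintro ⟨hi, hdi⟩
                rw [Finset.mem_erase] at hi
                rcases Finset.mem_insert.1 hi.2 with rfl | hi'
                · exact ⟨Finset.mem_insert_self _ _, hdi⟩
                · rw [hV, Finset.mem_filter] at hi'
                  exact ⟨Finset.mem_insert_of_mem (Finset.mem_erase.2 ⟨hi.1, hi'.1⟩), hdi⟩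
            have hsubQ : (insert m V).erase ℓ ⊆ Sfun (u+1) := by
              rw [heq]
              intro i hi
              rw [Finset.mem_erase] at hi
              rcases Finset.mem_insert.1 hi.2 with rfl | hi'
              · exact Finset.mem_erase.2 ⟨hi.1, hmP⟩
              · exact Finset.mem_erase.2 ⟨hi.1, hVsub hi'⟩
            have := work_mono (ν := ν) (d := d) hsubQ t
            have := hQok t ht r hr
            rw [e1]
            omega
        have hcard : W'.card = W.card := by
          rw [hW', Finset.card_insert_of_notMem
            (fun hc => hmW (Finset.mem_of_mem_erase hc)), Finset.card_erase_of_mem hℓW]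
          have : 1 ≤ W.card := Finset.card_pos.2 ⟨ℓ, hℓW⟩
          omega
        refine ⟨W', ok_feasible hν hd hW'ok, ?_, ?_, ?_⟩
        · intro i hi
          rcases Finset.mem_insert.1 hi with rfl | hi'
          · omega
          · exact hWl i (Finset.mem_of_mem_erase hi')
        · intro W'' hW''l hW''f
          rw [hcard]
          exact hWmax W'' hW''l hW''f
        · intro i hi hiu
          rw [heq]
          rcases Finset.mem_insert.1 hi with rfl | hi'
          · exact Finset.mem_erase.2 ⟨hmℓ, hmP⟩
          · rw [Finset.mem_erase] at hi'
            refine Finset.mem_erase.2 ⟨hi'.1, ?_⟩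
            rcases Nat.lt_or_ge (i : ℕ) u with h | h
            · exact Finset.mem_insert_of_mem (hWint i hi'.2 h)
            · have : i = k := Fin.ext (by omega)
              rw [this]; exact Finset.mem_insert_self _ _
      · -- ℓ ∉ W : W still works
        refine ⟨W, hWf, hWl, hWmax, ?_⟩
        intro i hi hiu
        rw [heq]
        have hiℓ : i ≠ ℓ := fun hc => hℓW (hc ▸ hi)
        refine Finset.mem_erase.2 ⟨hiℓ, ?_⟩
        rcases Nat.lt_or_ge (i : ℕ) u with h | h
        · exact Finset.mem_insert_of_mem (hWint i hi h)
        · have : i = k := Fin.ext (by omega)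
          rw [this]; exact Finset.mem_insert_self _ _
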